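/- Let G be an edge-minimal counterexample to the statement 'every graph without isolated vertices and isolated edges satisfies γ_tg(G) ≤ 3n/4'. Then no vertex of G is adjacent to two or more leaves. -/

import Mathlib

open scoped Classical

namespace GameTD

/-- A move `v` is legal w.r.t. selected set `S` in the total domination game:
`v` totally dominates some vertex not yet totally dominated. -/
def Legal {V : Type*} (G : SimpleGraph V) (S : Finset V) (v : V) : Prop :=
  ∃ w, G.Adj v w ∧ ∀ u ∈ S, ¬ G.Adj u w

theorem Legal.not_mem {V : Type*} {G : SimpleGraph V} {S : Finset V} {v : V}
    (h : Legal G S v) : v ∉ S := by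
  rcases h with ⟨w, hadj, hw⟩
  intro hv
  exact hw v hv hadj

/-- The value of the total domination game from position `S`, with `b = true`
meaning Dominator (the minimizer) to move. The game ends when no legal move exists. -/
noncomputable def val {V : Type*} [Fintype V] (G : SimpleGraph V) (b : Bool) (S : Finset V) : ℕ :=
  let L := Finset.univ.filter (fun v => Legal G S v)
  if h : L.Nonempty then
    have hL : L.attach.Nonempty := h.attach
    if b then
      1 + L.attach.inf' hL (fun v => val G false (insert v.1 S))
    else
      1 + L.attach.sup' hL (fun v => val G true (insert v.1 S))
  else 0
termination_by (Finset.univ \ S).card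
decreasing_by
  all_goals {
    have hv : Legal G S v.1 := by
      have := v.2
      try simp only [Finset.mem_filter] at this
      exact (Finset.mem_filter.mp v.2).2
    have hvS : v.1 ∉ S := hv.not_mem
    apply Finset.card_lt_card
    constructor
    · intro x hx
      simp only [Finset.mem_sdiff] at hx ⊢
      exact ⟨hx.1, fun hmem => hx.2 (Finset.mem_insert_of_mem hmem)⟩
    · intro hsub
      have : v.1 ∈ Finset.univ \ S := by
        simp [hvS]
      have := hsub this
      simp at this
  }

/-- The game total domination number: Dominator starts from the empty position. -/
noncomputable def gammaTG {V : Type*} [Fintype V] (G : SimpleGraph V) : ℕ :=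
  val G true ∅

end GameTD

set_option linter.unusedSectionVars false

lemma one_add_add_one (a : ℕ) : 1 + (a + 1) = a + 2 := by omega

namespace GameTDAux
open GameTD

noncomputable scoped instance (priority := 10000) instDEqAux {α : Type*} : DecidableEq α :=
  fun a b => Classical.propDecidable (a = b)

variable {V : Type*} [Fintype V] {G : SimpleGraph V}

lemma measure_lt {S : Finset V} {v : V} (hv : v ∉ S) :
    (Finset.univ \ insert v S).card < (Finset.univ \ S).card := by
  apply Finset.card_lt_card
  constructor
  · intro x hx
    simp only [Finset.mem_sdiff] at hx ⊢
    exact ⟨hx.1, fun hm => hx.2 (Finset.mem_insert_of_mem hm)⟩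
  · intro hsub
    have hmem : v ∈ Finset.univ \ S := by simp [hv]
    have := hsub hmem
    simp at this

lemma val_of_no_legal {S : Finset V} (h : ∀ v, ¬ Legal G S v) (b : Bool) :
    val G b S = 0 := by
  rw [val.eq_def]
  have he : Finset.univ.filter (fun v => Legal G S v) = ∅ := by
    ext v; simp [h v]
  simp [he]

lemma val_true_le {S : Finset V} {v : V} (hv : Legal G S v) :
    val G true S ≤ 1 + val G false (insert v S) := by
  rw [val.eq_def]
  have hL : v ∈ Finset.univ.filter (fun v => Legal G S v) := by simp [hv]
  have hne : (Finset.univ.filter (fun v => Legal G S v)).Nonempty := ⟨v, hL⟩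
  simp only [dif_pos hne, if_true]
  exact Nat.add_le_add_left (Finset.inf'_le (fun v => val G false (insert v.1 S)) (Finset.mem_attach _ ⟨v, hL⟩)) 1

lemma val_false_ge {S : Finset V} {v : V} (hv : Legal G S v) :
    1 + val G true (insert v S) ≤ val G false S := by
  conv_rhs => rw [val.eq_def]
  have hL : v ∈ Finset.univ.filter (fun v => Legal G S v) := by simp [hv]
  have hne : (Finset.univ.filter (fun v => Legal G S v)).Nonempty := ⟨v, hL⟩
  simp only [dif_pos hne, Bool.false_eq_true, if_false]
  exact Nat.add_le_add_left (Finset.le_sup' (fun v => val G true (insert v.1 S)) (Finset.mem_attach _ ⟨v, hL⟩)) 1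

lemma val_true_exists {S : Finset V} (h : ∃ v, Legal G S v) :
    ∃ v, Legal G S v ∧ val G true S = 1 + val G false (insert v S) := by
  obtain ⟨v0, hv0⟩ := h
  have hne : (Finset.univ.filter (fun v => Legal G S v)).Nonempty := ⟨v0, by simp [hv0]⟩
  obtain ⟨w, hw, heq⟩ := Finset.exists_mem_eq_inf' hne.attach
    (fun v => val G false (insert v.1 S))
  refine ⟨w.1, ?_, ?_⟩
  · have := w.2
    simp only [Finset.mem_filter] at this
    exact this.2
  · rw [val.eq_def]
    simp only [dif_pos hne, if_true, heq]

lemma val_false_exists {S : Finset V} (h : ∃ v, Legal G S v) :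
    ∃ v, Legal G S v ∧ val G false S = 1 + val G true (insert v S) := by
  obtain ⟨v0, hv0⟩ := h
  have hne : (Finset.univ.filter (fun v => Legal G S v)).Nonempty := ⟨v0, by simp [hv0]⟩
  obtain ⟨w, hw, heq⟩ := Finset.exists_mem_eq_sup' hne.attach
    (fun v => val G true (insert v.1 S))
  refine ⟨w.1, ?_, ?_⟩
  · have := w.2
    simp only [Finset.mem_filter] at this
    exact this.2
  · rw [val.eq_def]
    simp only [dif_pos hne, Bool.false_eq_true, if_false, heq]

end GameTDAux

namespace GameTDAux
open GameTD

lemma insert_irrel {α : Type*} (i j : DecidableEq α) (a : α) (s : Finset α) :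
    @insert α (Finset α) (@Finset.instInsert α i) a s
      = @insert α (Finset α) (@Finset.instInsert α j) a s := by
  have h : i = j := Subsingleton.elim i j
  subst h; rfl

lemma image_insert' {α β : Type*} (f : α → β) (a : α) (s : Finset α) :
    (insert a s).image f = insert (f a) (s.image f) := by
  ext b
  simp only [Finset.mem_image, Finset.mem_insert]
  constructor
  · rintro ⟨x, rfl | hx, rfl⟩
    · exact Or.inl rfl
    · exact Or.inr ⟨x, hx, rfl⟩
  · rintro (rfl | ⟨x, hx, rfl⟩)
    · exact ⟨a, Or.inl rfl, rfl⟩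
    · exact ⟨x, Or.inr hx, rfl⟩

/-- the graph with vertex `z` deleted -/
noncomputable def Gdel {V : Type} (G : SimpleGraph V) (z : V) :
    SimpleGraph {v : V // v ≠ z} := G.comap Subtype.val

section Bisim
variable {V : Type} [Fintype V] {G : SimpleGraph V} {x y z : V}
variable [Fintype {v : V // v ≠ z}]
variable (hyz : y ≠ z) (hxy : G.Adj x y) (hxz : G.Adj x z)
  (hy : ∀ w, G.Adj y w → w = x) (hz : ∀ w, G.Adj z w → w = x)

/-- collapse map sending `z` to `y`. -/
noncomputable def fd (hyz : y ≠ z) : V → {v : V // v ≠ z} :=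
  fun v => if h : v = z then ⟨y, hyz⟩ else ⟨v, h⟩

omit [Fintype V] in
lemma fd_val (v : V) : (fd hyz v).1 = if v = z then y else v := by
  by_cases h : v = z <;> simp [fd, h]

omit [Fintype V] in
lemma fd_val_subtype (v' : {v : V // v ≠ z}) : fd hyz v'.1 = v' := by
  apply Subtype.ext
  rw [fd_val, if_neg v'.2]

include hxy hxz hy hz in
omit [Fintype V] in
lemma fd_adj (u w : V) :
    (Gdel G z).Adj (fd hyz u) (fd hyz w) ↔ G.Adj u w := by
  have hyadj : ∀ w, G.Adj y w ↔ w = x := by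
    intro w; exact ⟨hy w, fun h => h ▸ hxy.symm⟩
  have hzadj : ∀ w, G.Adj z w ↔ w = x := by
    intro w; exact ⟨hz w, fun h => h ▸ hxz.symm⟩
  have fdz : ∀ v, v = z → (fd hyz v).1 = y := by
    intro v h; rw [fd_val, if_pos h]
  have fdne : ∀ v, ¬ v = z → (fd hyz v).1 = v := by
    intro v h; rw [fd_val, if_neg h]
  show G.Adj (fd hyz u).1 (fd hyz w).1 ↔ _
  by_cases hu : u = z <;> by_cases hw : w = z
  · rw [fdz u hu, fdz w hw, hu, hw]
    simp
  · rw [fdz u hu, fdne w hw, hu, hyadj w, hzadj w]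
  · rw [fdne u hu, fdz w hw, hw, G.adj_comm u y, G.adj_comm u z, hyadj u, hzadj u]
  · rw [fdne u hu, fdne w hw]

include hxy hxz hy hz in
omit [Fintype V] in
lemma legal_map {S : Finset V} {v : V} (hv : Legal G S v) :
    Legal (Gdel G z) (S.image (fd hyz)) (fd hyz v) := by
  obtain ⟨w, hadj, hdom⟩ := hv
  refine ⟨fd hyz w, (fd_adj hyz hxy hxz hy hz v w).2 hadj, ?_⟩
  intro u' hu'
  obtain ⟨u, hu, rfl⟩ := Finset.mem_image.mp hu'
  exact fun hc => hdom u hu ((fd_adj hyz hxy hxz hy hz u w).1 hc)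

include hxy hxz hy hz in
omit [Fintype V] in
lemma legal_unmap {S : Finset V} {v' : {v : V // v ≠ z}}
    (hv : Legal (Gdel G z) (S.image (fd hyz)) v') :
    Legal G S v'.1 := by
  obtain ⟨w', hadj, hdom⟩ := hv
  refine ⟨w'.1, ?_, ?_⟩
  · have h := (fd_adj hyz hxy hxz hy hz v'.1 w'.1)
    rw [fd_val_subtype hyz v', fd_val_subtype hyz w'] at h
    exact h.1 hadj
  · intro u hu hc
    refine hdom (fd hyz u) (Finset.mem_image_of_mem _ hu) ?_
    have h := (fd_adj hyz hxy hxz hy hz u w'.1)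
    rw [fd_val_subtype hyz w'] at h
    exact h.2 hc

include hxy hxz hy hz in
lemma bisim_aux : ∀ (k : ℕ) (b : Bool) (S : Finset V), (Finset.univ \ S).card = k →
    val (Gdel G z) b (S.image (fd hyz)) = val G b S := by
  intro k
  induction k using Nat.strong_induction_on with
  | _ k ih =>
    intro b S hk
    by_cases hleg : ∃ v, Legal G S v
    · have hlegH : ∃ v', Legal (Gdel G z) (S.image (fd hyz)) v' :=
        ⟨fd hyz hleg.choose, legal_map hyz hxy hxz hy hz hleg.choose_spec⟩
      have key : ∀ (b' : Bool) (v : V), Legal G S v →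
          val (Gdel G z) b' ((insert v S).image (fd hyz)) = val G b' (insert v S) := by
        intro b' v hv
        exact ih _ (hk ▸ measure_lt hv.not_mem) b' (insert v S) rfl
      cases b
      · -- staller to move
        apply le_antisymm
        · obtain ⟨v', hv', heq⟩ := val_false_exists hlegH
          have hvleg : Legal G S v'.1 := legal_unmap hyz hxy hxz hy hz hv'
          rw [← fd_val_subtype hyz v', ← image_insert', key true v'.1 hvleg] at heq
          rw [heq]
          exact val_false_ge hvleg
        · obtain ⟨v, hv, heq⟩ := val_false_exists hleg
          rw [heq, ← key true v hv, image_insert']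
          refine le_trans (le_of_eq ?_)
            (val_false_ge (legal_map hyz hxy hxz hy hz hv))
          exact congrArg (fun t => 1 + val (Gdel G z) true t) (insert_irrel _ _ _ _)
      · -- dominator to move
        apply le_antisymm
        · obtain ⟨v, hv, heq⟩ := val_true_exists hleg
          rw [heq, ← key false v hv, image_insert']
          refine le_trans (val_true_le (legal_map hyz hxy hxz hy hz hv)) (le_of_eq ?_)
          exact congrArg (fun t => 1 + val (Gdel G z) false t) (insert_irrel _ _ _ _)
        · obtain ⟨v', hv', heq⟩ := val_true_exists hlegH
          have hvleg : Legal G S v'.1 := legal_unmap hyz hxy hxz hy hz hv'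
          rw [← fd_val_subtype hyz v', ← image_insert', key false v'.1 hvleg] at heq
          rw [heq]
          exact val_true_le hvleg
    · have hnoH : ∀ v', ¬ Legal (Gdel G z) (S.image (fd hyz)) v' := by
        intro v' hc
        exact hleg ⟨v'.1, legal_unmap hyz hxy hxz hy hz hc⟩
      rw [val_of_no_legal hnoH b, val_of_no_legal (fun v hv => hleg ⟨v, hv⟩) b]

include hyz hxy hxz hy hz in
lemma gamma_del_leaf : GameTD.gammaTG (Gdel G z) = GameTD.gammaTG G := by
  have h := bisim_aux hyz hxy hxz hy hz (Finset.univ \ (∅ : Finset V)).card true ∅ rfl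
  rwa [Finset.image_empty] at h

end Bisim
/-- the graph with the three vertices `x,y,z` deleted -/
noncomputable def Gcut {V : Type} (G : SimpleGraph V) (x y z : V) :
    SimpleGraph {v : V // v ∉ ({x, y, z} : Finset V)} := G.comap Subtype.val

noncomputable def pcut {V : Type} (x y z : V) (S : Finset V) :
    Finset {v : V // v ∉ ({x, y, z} : Finset V)} := S.subtype _

noncomputable def rC {V : Type} (x y z : V) (S : Finset V) : ℕ :=
  (if x ∈ S then 0 else 1) + (if y ∈ S ∨ z ∈ S then 0 else 1)

section P3
variable {V : Type} [Fintype V] {G : SimpleGraph V} {x y z : V}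
variable [Fintype {v : V // v ∉ ({x, y, z} : Finset V)}]
variable (hxy : G.Adj x y) (hxz : G.Adj x z) (hyz : y ≠ z)
  (hy : ∀ w, G.Adj y w → w = x) (hz : ∀ w, G.Adj z w → w = x)
  (hx : ∀ w, G.Adj x w → w = y ∨ w = z)

omit [Fintype V] in
lemma mem_C {v : V} (h : v ∈ ({x, y, z} : Finset V)) : v = x ∨ v = y ∨ v = z := by
  simpa using h

omit [Fintype V] in
lemma not_mem_C {v : V} (h : v ∉ ({x, y, z} : Finset V)) : v ≠ x ∧ v ≠ y ∧ v ≠ z := by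
  simp only [Finset.mem_insert, Finset.mem_singleton, not_or] at h
  exact h

omit [Fintype V] in
include hxy hxz hy hx in
lemma legal_x {S : Finset V} : Legal G S x ↔ x ∉ S := by
  constructor
  · rintro ⟨w, hadj, hdom⟩ hxS
    rcases hx w hadj with rfl | rfl
    · exact hdom x hxS hxy
    · exact hdom x hxS hxz
  · intro hxS
    refine ⟨y, hxy, fun u hu hadj => ?_⟩
    have : u = x := hy u hadj.symm
    exact hxS (this ▸ hu)

omit [Fintype V] in
include hxy hxz hy hz hx in
lemma legal_y {S : Finset V} : Legal G S y ↔ (y ∉ S ∧ z ∉ S) := by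
  constructor
  · rintro ⟨w, hadj, hdom⟩
    have hwx : w = x := hy w hadj
    subst hwx
    exact ⟨fun hyS => hdom y hyS hxy.symm, fun hzS => hdom z hzS hxz.symm⟩
  · rintro ⟨hyS, hzS⟩
    refine ⟨x, hxy.symm, fun u hu hadj => ?_⟩
    rcases hx u hadj.symm with rfl | rfl
    · exact hyS hu
    · exact hzS hu

omit [Fintype V] in
include hxy hxz hy hz hx in
lemma legal_z {S : Finset V} : Legal G S z ↔ (y ∉ S ∧ z ∉ S) := by
  constructor
  · rintro ⟨w, hadj, hdom⟩
    have hwx : w = x := hz w hadj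
    subst hwx
    exact ⟨fun hyS => hdom y hyS hxy.symm, fun hzS => hdom z hzS hxz.symm⟩
  · rintro ⟨hyS, hzS⟩
    refine ⟨x, hxz.symm, fun u hu hadj => ?_⟩
    rcases hx u hadj.symm with rfl | rfl
    · exact hyS hu
    · exact hzS hu

omit [Fintype V] in
include hxy hxz hy hz hx in
lemma legal_W {S : Finset V} {v : V} (hv : v ∉ ({x, y, z} : Finset V)) :
    Legal G S v ↔ Legal (Gcut G x y z) (pcut x y z S) ⟨v, hv⟩ := by
  constructor
  · rintro ⟨w, hadj, hdom⟩
    have hw : w ∉ ({x, y, z} : Finset V) := by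
      simp only [Finset.mem_insert, Finset.mem_singleton, not_or]
      obtain ⟨hv1, hv2, hv3⟩ := not_mem_C hv
      refine ⟨fun hwx => ?_, fun hwy => ?_, fun hwz => ?_⟩
      · subst hwx
        rcases hx v hadj.symm with rfl | rfl
        · exact hv2 rfl
        · exact hv3 rfl
      · subst hwy
        exact hv1 (hy v hadj.symm)
      · subst hwz
        exact hv1 (hz v hadj.symm)
    refine ⟨⟨w, hw⟩, hadj, fun u' hu' hadj' => ?_⟩
    exact hdom u'.1 (Finset.mem_subtype.mp hu') hadj'
  · rintro ⟨w', hadj, hdom⟩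
    refine ⟨w'.1, hadj, fun u hu hadj' => ?_⟩
    by_cases huC : u ∈ ({x, y, z} : Finset V)
    · obtain ⟨hw1, hw2, hw3⟩ := not_mem_C w'.2
      rcases mem_C huC with rfl | rfl | rfl
      · rcases hx w'.1 hadj' with h | h
        · exact hw2 h
        · exact hw3 h
      · exact hw1 (hy w'.1 hadj')
      · exact hw1 (hz w'.1 hadj')
    · exact hdom ⟨u, huC⟩ (Finset.mem_subtype.mpr hu) hadj'

omit [Fintype V] in
include hxy hxz hy hz hx in
lemma legal_lift {S : Finset V} {v' : {v : V // v ∉ ({x, y, z} : Finset V)}}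
    (h : Legal (Gcut G x y z) (pcut x y z S) v') : Legal G S v'.1 :=
  (legal_W hxy hxz hy hz hx v'.2).mpr h

omit [Fintype V] in
lemma pcut_insert_C {S : Finset V} {c : V} (hc : c ∈ ({x, y, z} : Finset V)) :
    pcut x y z (insert c S) = pcut x y z S := by
  unfold pcut
  ext a
  simp only [Finset.mem_subtype, Finset.mem_insert]
  have : a.1 ≠ c := fun h => a.2 (h ▸ hc)
  simp [this]

omit [Fintype V] in
lemma pcut_insert_W {S : Finset V} {v : V} (hv : v ∉ ({x, y, z} : Finset V)) :
    pcut x y z (insert v S) = insert ⟨v, hv⟩ (pcut x y z S) := by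
  unfold pcut
  ext a
  simp only [Finset.mem_subtype, Finset.mem_insert, Subtype.ext_iff]

omit [Fintype V] in
lemma pcut_empty : pcut x y z (∅ : Finset V) = ∅ := by
  unfold pcut
  ext a
  simp [Finset.mem_subtype]

omit [Fintype V] in
include hxy hxz in
lemma r_insert_x {S : Finset V} (hxS : x ∉ S) :
    rC x y z (insert x S) + 1 = rC x y z S := by
  unfold rC
  by_cases hyzS : y ∈ S ∨ z ∈ S <;>
    simp [Finset.mem_insert, hxS, hyzS, hxy.ne', hxz.ne']

omit [Fintype V] in
include hxy hxz hyz in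
lemma r_insert_y {S : Finset V} (h : y ∉ S ∧ z ∉ S) :
    rC x y z (insert y S) + 1 = rC x y z S := by
  unfold rC
  by_cases hxS : x ∈ S <;>
    simp [Finset.mem_insert, hxS, h.1, h.2, hxy.ne, hxz.ne, hyz]

omit [Fintype V] in
include hxy hxz hyz in
lemma r_insert_z {S : Finset V} (h : y ∉ S ∧ z ∉ S) :
    rC x y z (insert z S) + 1 = rC x y z S := by
  unfold rC
  by_cases hxS : x ∈ S <;>
    simp [Finset.mem_insert, hxS, h.1, h.2, hxy.ne, hxz.ne, hyz]

omit [Fintype V] in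
lemma r_insert_W {S : Finset V} {v : V} (hv : v ∉ ({x, y, z} : Finset V)) :
    rC x y z (insert v S) = rC x y z S := by
  obtain ⟨h1, h2, h3⟩ := not_mem_C hv
  have n1 : x ≠ v := Ne.symm h1
  have n2 : y ≠ v := Ne.symm h2
  have n3 : z ≠ v := Ne.symm h3
  unfold rC
  by_cases hxS : x ∈ S <;> by_cases hyzS : y ∈ S ∨ z ∈ S <;>
    simp [Finset.mem_insert, n1, n2, n3, hxS, hyzS]

omit [Fintype V] in
lemma rC_empty : rC x y z (∅ : Finset V) = 2 := by
  simp [rC]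


include hxy hxz hyz hy hz hx in
lemma valE : ∀ (k : ℕ) (S : Finset V), (Finset.univ \ S).card = k →
    (∀ v', ¬ Legal (Gcut G x y z) (pcut x y z S) v') → ∀ b, val G b S ≤ rC x y z S := by
  intro k
  induction k using Nat.strong_induction_on with
  | _ k ih =>
    intro S hk hno b
    by_cases hleg : ∃ v, Legal G S v
    · have hCmove : ∀ v, Legal G S v →
          rC x y z (insert v S) + 1 = rC x y z S ∧
          pcut x y z (insert v S) = pcut x y z S := by
        intro v hv
        by_cases hvC : v ∈ ({x, y, z} : Finset V)
        · refine ⟨?_, pcut_insert_C hvC⟩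
          rcases mem_C hvC with rfl | rfl | rfl
          · exact r_insert_x hxy hxz ((legal_x hxy hxz hy hx).1 hv)
          · exact r_insert_y hxy hxz hyz ((legal_y hxy hxz hy hz hx).1 hv)
          · exact r_insert_z hxy hxz hyz ((legal_z hxy hxz hy hz hx).1 hv)
        · exact absurd ((legal_W hxy hxz hy hz hx hvC).1 hv) (hno _)
      cases b
      · obtain ⟨v, hv, heq⟩ := val_false_exists hleg
        obtain ⟨hr, hp⟩ := hCmove v hv
        have hih : val G true (insert v S) ≤ rC x y z (insert v S) := by
          refine ih _ (hk ▸ measure_lt hv.not_mem) (insert v S) rfl ?_ true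
          rw [hp]; exact hno
        rw [heq, ← hr, Nat.add_comm (rC x y z (insert v S)) 1]
        exact Nat.add_le_add_left hih 1
      · obtain ⟨v, hv, heq⟩ := val_true_exists hleg
        obtain ⟨hr, hp⟩ := hCmove v hv
        have hih : val G false (insert v S) ≤ rC x y z (insert v S) := by
          refine ih _ (hk ▸ measure_lt hv.not_mem) (insert v S) rfl ?_ false
          rw [hp]; exact hno
        rw [heq, ← hr, Nat.add_comm (rC x y z (insert v S)) 1]
        exact Nat.add_le_add_left hih 1
    · have h0 : val G b S = 0 := val_of_no_legal (fun v hv => hleg ⟨v, hv⟩) b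
      rw [h0]
      exact Nat.zero_le _

include hxy hxz hyz hy hz hx in
lemma main2 : ∀ (k : ℕ) (S : Finset V), (Finset.univ \ S).card = k →
    ((rC x y z S = 0 ∨ rC x y z S = 2) →
      val G true S ≤ val (Gcut G x y z) true (pcut x y z S) + rC x y z S) ∧
    ((rC x y z S = 0 ∨ rC x y z S = 2) →
      val G false S ≤ val (Gcut G x y z) false (pcut x y z S) + rC x y z S) ∧
    (rC x y z S = 1 →
      val G true S ≤ val (Gcut G x y z) false (pcut x y z S) + 1) := by
  intro k
  induction k using Nat.strong_induction_on with
  | _ k ih =>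
    intro S hk
    refine ⟨?_, ?_, ?_⟩
    · intro hr
      by_cases hH : ∃ v', Legal (Gcut G x y z) (pcut x y z S) v'
      · obtain ⟨v', hv', heq⟩ := val_true_exists hH
        have hvleg : Legal G S v'.1 := legal_lift hxy hxz hy hz hx hv'
        have h1 : val G true S ≤ 1 + val G false (insert v'.1 S) := val_true_le hvleg
        have h2 := ((ih _ (hk ▸ measure_lt hvleg.not_mem) (insert v'.1 S) rfl).2.1)
          (by rw [r_insert_W v'.2]; exact hr)
        rw [r_insert_W v'.2, pcut_insert_W v'.2] at h2
        simp only [Subtype.coe_eta] at h2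
        rw [heq, Nat.add_assoc]
        exact le_trans h1 (Nat.add_le_add_left h2 1)
      · have h0 : val (Gcut G x y z) true (pcut x y z S) = 0 :=
          val_of_no_legal (fun v hv => hH ⟨v, hv⟩) true
        have hE := valE hxy hxz hyz hy hz hx k S hk (fun v hv => hH ⟨v, hv⟩) true
        rw [h0, Nat.zero_add]
        exact hE
    · intro hr
      by_cases hleg : ∃ v, Legal G S v
      · obtain ⟨v, hv, heq⟩ := val_false_exists hleg
        by_cases hvC : v ∈ ({x, y, z} : Finset V)
        · have hrdec : rC x y z (insert v S) + 1 = rC x y z S := by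
            rcases mem_C hvC with rfl | rfl | rfl
            · exact r_insert_x hxy hxz ((legal_x hxy hxz hy hx).1 hv)
            · exact r_insert_y hxy hxz hyz ((legal_y hxy hxz hy hz hx).1 hv)
            · exact r_insert_z hxy hxz hyz ((legal_z hxy hxz hy hz hx).1 hv)
          rcases hr with h0 | h2
          · rw [h0] at hrdec
            exact absurd hrdec (Nat.succ_ne_zero _)
          · have hr1 : rC x y z (insert v S) = 1 := by
              rw [h2] at hrdec
              exact Nat.add_right_cancel (hrdec.trans rfl)
            have h3 := ((ih _ (hk ▸ measure_lt hv.not_mem) (insert v S) rfl).2.2) hr1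
            rw [pcut_insert_C hvC] at h3
            rw [heq, h2]
            calc 1 + val G true (insert v S)
                ≤ 1 + (val (Gcut G x y z) false (pcut x y z S) + 1) :=
                  Nat.add_le_add_left h3 1
              _ = val (Gcut G x y z) false (pcut x y z S) + 2 :=
                  one_add_add_one _
        · have hlegH : Legal (Gcut G x y z) (pcut x y z S) ⟨v, hvC⟩ :=
            (legal_W hxy hxz hy hz hx hvC).1 hv
          have hge := val_false_ge hlegH
          have h3 := ((ih _ (hk ▸ measure_lt hv.not_mem) (insert v S) rfl).1)
            (by rw [r_insert_W hvC]; exact hr)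
          rw [r_insert_W hvC, pcut_insert_W hvC] at h3
          rw [heq]
          calc 1 + val G true (insert v S)
              ≤ 1 + (val (Gcut G x y z) true (insert ⟨v, hvC⟩ (pcut x y z S)) + rC x y z S) :=
                Nat.add_le_add_left h3 1
            _ = (1 + val (Gcut G x y z) true (insert ⟨v, hvC⟩ (pcut x y z S))) + rC x y z S := by
                rw [Nat.add_assoc]
            _ ≤ val (Gcut G x y z) false (pcut x y z S) + rC x y z S :=
                Nat.add_le_add_right hge _
      · have h0 : val G false S = 0 := val_of_no_legal (fun v hv => hleg ⟨v, hv⟩) false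
        rw [h0]
        exact Nat.zero_le _
    · intro hr
      have hc : ∃ c, Legal G S c ∧ rC x y z (insert c S) = 0 ∧
          pcut x y z (insert c S) = pcut x y z S := by
        by_cases hxS : x ∈ S
        · have hy' : y ∉ S ∧ z ∉ S := by
            by_contra hcon
            have hyzS : y ∈ S ∨ z ∈ S := by
              by_cases hyS : y ∈ S
              · exact Or.inl hyS
              · by_cases hzS : z ∈ S
                · exact Or.inr hzS
                · exact absurd ⟨hyS, hzS⟩ hcon
            have h0 : rC x y z S = 0 := by
              unfold rC
              simp [hxS, hyzS]
            exact absurd (hr.symm.trans h0) one_ne_zero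
          refine ⟨y, (legal_y hxy hxz hy hz hx).2 hy', ?_, pcut_insert_C (by simp)⟩
          have hh := r_insert_y hxy hxz hyz (S := S) hy'
          rw [hr] at hh
          exact Nat.add_right_cancel (hh.trans rfl)
        · have hyzS : y ∈ S ∨ z ∈ S := by
            by_contra hcon
            push_neg at hcon
            have h2 : rC x y z S = 2 := by
              unfold rC
              simp [hxS, hcon.1, hcon.2]
            have h12 : (1 : ℕ) = 2 := hr.symm.trans h2
            exact absurd h12 (by norm_num)
          refine ⟨x, (legal_x hxy hxz hy hx).2 hxS, ?_, pcut_insert_C (by simp)⟩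
          have hh := r_insert_x hxy hxz (S := S) hxS
          rw [hr] at hh
          exact Nat.add_right_cancel (hh.trans rfl)
      obtain ⟨c, hcleg, hrc, hpc⟩ := hc
      have h1 := val_true_le hcleg
      have h2 := ((ih _ (hk ▸ measure_lt hcleg.not_mem) (insert c S) rfl).2.1) (Or.inl hrc)
      rw [hrc, hpc, Nat.add_zero] at h2
      refine le_trans h1 ?_
      rw [Nat.add_comm 1 (val G false (insert c S))]
      exact Nat.add_le_add_right h2 1

include hxy hxz hyz hy hz hx in
lemma gamma_cut : GameTD.gammaTG G ≤ GameTD.gammaTG (Gcut G x y z) + 2 := by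
  have h := ((main2 hxy hxz hyz hy hz hx
      (Finset.univ \ (∅ : Finset V)).card ∅ rfl).1) (Or.inr rC_empty)
  rw [rC_empty, pcut_empty] at h
  exact h

end P3
end GameTDAux

section Glue
open GameTD

lemma edge_lt {V : Type} [Fintype V] (G : SimpleGraph V) (p : V → Prop)
    [Fintype {v : V // p v}] {a b : V} (hab : G.Adj a b) (hb : ¬ p b) :
    (SimpleGraph.comap (Subtype.val : {v : V // p v} → V) G).edgeFinset.card
      < G.edgeFinset.card := by
  classical
  have hinj : Function.Injective (Sym2.map (Subtype.val : {v : V // p v} → V)) :=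
    Sym2.map.injective Subtype.val_injective
  have hsub : (SimpleGraph.comap (Subtype.val : {v : V // p v} → V) G).edgeFinset.image
      (Sym2.map Subtype.val) ⊆ G.edgeFinset.erase s(a, b) := by
    intro e he
    obtain ⟨e', he', rfl⟩ := Finset.mem_image.mp he
    induction e' using Sym2.ind with
    | _ u v =>
      have hadj' : (SimpleGraph.comap (Subtype.val : {v : V // p v} → V) G).Adj u v :=
        (SimpleGraph.mem_edgeSet _).mp (SimpleGraph.mem_edgeFinset.mp he')
      have hadj : G.Adj u.1 v.1 := hadj'
      rw [Finset.mem_erase]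
      constructor
      · intro hcon
        rw [Sym2.map_pair_eq, Sym2.eq_iff] at hcon
        rcases hcon with ⟨-, h2⟩ | ⟨h1, -⟩
        · exact hb (h2 ▸ v.2)
        · exact hb (h1 ▸ u.2)
      · rw [Sym2.map_pair_eq, SimpleGraph.mem_edgeFinset]
        exact (SimpleGraph.mem_edgeSet _).mpr hadj
  calc (SimpleGraph.comap (Subtype.val : {v : V // p v} → V) G).edgeFinset.card
      = ((SimpleGraph.comap (Subtype.val : {v : V // p v} → V) G).edgeFinset.image
          (Sym2.map Subtype.val)).card := (Finset.card_image_of_injective _ hinj).symm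
    _ ≤ (G.edgeFinset.erase s(a, b)).card := Finset.card_le_card hsub
    _ < G.edgeFinset.card := Finset.card_erase_lt_of_mem
        (SimpleGraph.mem_edgeFinset.mpr ((SimpleGraph.mem_edgeSet _).mpr hab))

lemma card_ne_subtype {V : Type} [Fintype V] (z : V) [Fintype {v : V // v ≠ z}] :
    Fintype.card {v : V // v ≠ z} = Fintype.card V - 1 := by
  classical
  rw [Fintype.card_of_subtype (Finset.univ.erase z) (by intro v; simp)]
  rw [Finset.card_erase_of_mem (Finset.mem_univ z), Finset.card_univ]

lemma card_notmem_subtype {V : Type} [Fintype V] (x y z : V)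
    [Fintype {v : V // v ∉ ({x, y, z} : Finset V)}]
    (hxy : x ≠ y) (hxz : x ≠ z) (hyz : y ≠ z) :
    Fintype.card {v : V // v ∉ ({x, y, z} : Finset V)} = Fintype.card V - 3 ∧
      3 ≤ Fintype.card V := by
  classical
  have hcard3 : ({x, y, z} : Finset V).card = 3 := by
    rw [Finset.card_insert_of_notMem (by simp [hxy, hxz]),
      Finset.card_insert_of_notMem (by simp [hyz]), Finset.card_singleton]
  constructor
  · rw [Fintype.card_of_subtype (Finset.univ \ ({x, y, z} : Finset V)) (by intro v; simp)]
    rw [Finset.card_sdiff_of_subset (Finset.subset_univ _), Finset.card_univ, hcard3]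
  · calc 3 = ({x, y, z} : Finset V).card := hcard3.symm
      _ ≤ Finset.univ.card := Finset.card_le_card (Finset.subset_univ _)
      _ = Fintype.card V := Finset.card_univ

end Glue

/-- If `G` is an edge-minimal counterexample to the 3/4-bound (among all finite
graphs without isolated vertices and without isolated edges), then no vertex of
`G` is adjacent to two or more leaves. -/
theorem no_two_leaves_of_minimal_counterexample {V : Type} [Fintype V] (G : SimpleGraph V)
    (h_no_isolated_vertex : ∀ v : V, ∃ w, G.Adj v w)
    (h_no_isolated_edge :
      ¬ ∃ u v : V, G.Adj u v ∧ (∀ w, G.Adj u w → w = v) ∧ (∀ w, G.Adj v w → w = u))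
    (h_counterexample : ¬ (4 * GameTD.gammaTG G ≤ 3 * Fintype.card V))
    (h_minimal : ∀ (W : Type) [Fintype W] (H : SimpleGraph W),
      (∀ v : W, ∃ w, H.Adj v w) →
      (¬ ∃ u v : W, H.Adj u v ∧ (∀ w, H.Adj u w → w = v) ∧ (∀ w, H.Adj v w → w = u)) →
      H.edgeFinset.card < G.edgeFinset.card →
      4 * GameTD.gammaTG H ≤ 3 * Fintype.card W) :
    ∀ x : V, ¬ ∃ y z : V, y ≠ z ∧ G.degree y = 1 ∧ G.degree z = 1 ∧ G.Adj x y ∧ G.Adj x z := by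
  intro x
  rintro ⟨y, z, hyz, hdy, hdz, hxy, hxz⟩
  have hy : ∀ w, G.Adj y w → w = x := by
    intro w hw
    have h1 : w ∈ G.neighborFinset y := by
      rw [SimpleGraph.mem_neighborFinset]; exact hw
    have h2 : x ∈ G.neighborFinset y := by
      rw [SimpleGraph.mem_neighborFinset]; exact hxy.symm
    exact Finset.card_le_one.mp (le_of_eq hdy) w h1 x h2
  have hz : ∀ w, G.Adj z w → w = x := by
    intro w hw
    have h1 : w ∈ G.neighborFinset z := by
      rw [SimpleGraph.mem_neighborFinset]; exact hw
    have h2 : x ∈ G.neighborFinset z := by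
      rw [SimpleGraph.mem_neighborFinset]; exact hxz.symm
    exact Finset.card_le_one.mp (le_of_eq hdz) w h1 x h2
  by_cases hw3 : ∃ w, G.Adj x w ∧ w ≠ y ∧ w ≠ z
  · -- construction 1: delete the leaf z
    obtain ⟨w0, hw0, hw0y, hw0z⟩ := hw3
    have hniv : ∀ v : {v : V // v ≠ z}, ∃ u, (GameTDAux.Gdel G z).Adj v u := by
      intro v
      obtain ⟨u, hu⟩ := h_no_isolated_vertex v.1
      by_cases huz : u = z
      · have hvx : v.1 = x := hz v.1 (huz ▸ hu).symm
        exact ⟨⟨y, hyz⟩, show G.Adj v.1 y by rw [hvx]; exact hxy⟩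
      · exact ⟨⟨u, huz⟩, hu⟩
    have hnie : ¬ ∃ u v : {v : V // v ≠ z}, (GameTDAux.Gdel G z).Adj u v ∧
        (∀ w, (GameTDAux.Gdel G z).Adj u w → w = v) ∧
        (∀ w, (GameTDAux.Gdel G z).Adj v w → w = u) := by
      rintro ⟨u, v, huv, hu1, hv1⟩
      by_cases hux : u.1 = x
      · have e1 : (⟨y, hyz⟩ : {v : V // v ≠ z}) = v :=
          hu1 ⟨y, hyz⟩ (show G.Adj u.1 y by rw [hux]; exact hxy)
        have e2 : (⟨w0, hw0z⟩ : {v : V // v ≠ z}) = v :=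
          hu1 ⟨w0, hw0z⟩ (show G.Adj u.1 w0 by rw [hux]; exact hw0)
        exact hw0y (congrArg Subtype.val (e2.trans e1.symm))
      by_cases hvx : v.1 = x
      · have e1 : (⟨y, hyz⟩ : {v : V // v ≠ z}) = u :=
          hv1 ⟨y, hyz⟩ (show G.Adj v.1 y by rw [hvx]; exact hxy)
        have e2 : (⟨w0, hw0z⟩ : {v : V // v ≠ z}) = u :=
          hv1 ⟨w0, hw0z⟩ (show G.Adj v.1 w0 by rw [hvx]; exact hw0)
        exact hw0y (congrArg Subtype.val (e2.trans e1.symm))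
      apply h_no_isolated_edge
      refine ⟨u.1, v.1, huv, ?_, ?_⟩
      · intro w hw
        by_cases hwz : w = z
        · subst hwz
          exact absurd (hz u.1 hw.symm) hux
        · exact congrArg Subtype.val (hu1 ⟨w, hwz⟩ hw)
      · intro w hw
        by_cases hwz : w = z
        · subst hwz
          exact absurd (hz v.1 hw.symm) hvx
        · exact congrArg Subtype.val (hv1 ⟨w, hwz⟩ hw)
    have hedge := edge_lt G (fun v => v ≠ z) hxz (by simp)
    have hmin := h_minimal {v : V // v ≠ z} (GameTDAux.Gdel G z) hniv hnie hedge
    have hgam := GameTDAux.gamma_del_leaf hyz hxy hxz hy hz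
    have hcard := card_ne_subtype (V := V) z
    have hpos : 1 ≤ Fintype.card V := Fintype.card_pos_iff.mpr ⟨z⟩
    apply h_counterexample
    rw [← hgam]
    omega
  · -- construction 2: the whole P3 component {x, y, z} gets deleted
    have hx : ∀ w, G.Adj x w → w = y ∨ w = z := by
      intro w hw
      by_cases h1 : w = y
      · exact Or.inl h1
      by_cases h2 : w = z
      · exact Or.inr h2
      exact absurd ⟨w, hw, h1, h2⟩ hw3
    have hnb : ∀ (a w : V), a ∉ ({x, y, z} : Finset V) → G.Adj a w →
        w ∉ ({x, y, z} : Finset V) := by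
      intro a w ha hw
      obtain ⟨ha1, ha2, ha3⟩ := GameTDAux.not_mem_C ha
      simp only [Finset.mem_insert, Finset.mem_singleton, not_or]
      refine ⟨?_, ?_, ?_⟩
      · rintro rfl
        rcases hx a hw.symm with h | h
        · exact ha2 h
        · exact ha3 h
      · rintro rfl
        exact ha1 (hy a hw.symm)
      · rintro rfl
        exact ha1 (hz a hw.symm)
    have hniv : ∀ v : {v : V // v ∉ ({x, y, z} : Finset V)},
        ∃ u, (GameTDAux.Gcut G x y z).Adj v u := by
      intro v
      obtain ⟨u, hu⟩ := h_no_isolated_vertex v.1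
      exact ⟨⟨u, hnb v.1 u v.2 hu⟩, hu⟩
    have hnie : ¬ ∃ u v : {v : V // v ∉ ({x, y, z} : Finset V)},
        (GameTDAux.Gcut G x y z).Adj u v ∧
        (∀ w, (GameTDAux.Gcut G x y z).Adj u w → w = v) ∧
        (∀ w, (GameTDAux.Gcut G x y z).Adj v w → w = u) := by
      rintro ⟨u, v, huv, hu1, hv1⟩
      apply h_no_isolated_edge
      refine ⟨u.1, v.1, huv, ?_, ?_⟩
      · intro w hw
        exact congrArg Subtype.val (hu1 ⟨w, hnb u.1 w u.2 hw⟩ hw)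
      · intro w hw
        exact congrArg Subtype.val (hv1 ⟨w, hnb v.1 w v.2 hw⟩ hw)
    have hedge := edge_lt G (fun v => v ∉ ({x, y, z} : Finset V)) hxy (by simp)
    have hmin := h_minimal {v : V // v ∉ ({x, y, z} : Finset V)}
      (GameTDAux.Gcut G x y z) hniv hnie hedge
    have hgam := GameTDAux.gamma_cut hxy hxz hyz hy hz hx
    obtain ⟨hcard, hpos⟩ := card_notmem_subtype x y z hxy.ne hxz.ne hyz
    apply h_counterexample
    omega
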